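/- Let X be a topological space. Then X is Jacobson if and only if the stalk functors at closed points are jointly conservative on set-valued sheaves: for every morphism φ : F ⟶ G in Sh(X), if for every point x ∈ X with {x} closed the induced map on stalks φ_x : F_x ⟶ G_x is an isomorphism, then φ is an isomorphism. -/

import Mathlib

open CategoryTheory CategoryTheory.Limits

universe u

namespace JacobsonStalkAux

open TopologicalSpace Opposite

variable {X : TopCat.{u}}

/-- The subterminal presheaf attached to an open set `U`: sections over `W` exist
(and are unique) iff `W ≤ U`. -/
def opPresheaf (U : Opens X) : TopCat.Presheaf (Type u) X where
  obj W := ULift (PLift (W.unop ≤ U))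
  map {W W'} i := TypeCat.ofHom fun h => ⟨⟨(i.unop.le).trans h.down.down⟩⟩

lemma ulift_plift_ext {p : Prop} (a b : ULift.{u} (PLift p)) : a = b :=
  Subsingleton.elim a b

lemma opPresheaf_isSheaf (U : Opens X) : (opPresheaf U).IsSheaf := by
  rw [TopCat.Presheaf.isSheaf_iff_isSheafUniqueGluing_types]
  intro ι V sf _
  exact ⟨⟨⟨iSup_le fun i => (sf i).down.down⟩⟩, fun i => ulift_plift_ext _ _,
    fun y _ => ulift_plift_ext _ _⟩

/-- The subterminal sheaf attached to an open set. -/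
def opSheaf (U : Opens X) : TopCat.Sheaf (Type u) X := ⟨opPresheaf U, opPresheaf_isSheaf U⟩

/-- The morphism of subterminal sheaves attached to an inclusion of opens. -/
def opHom {U V : Opens X} (h : U ≤ V) : opSheaf U ⟶ opSheaf V :=
  ⟨{ app := fun W => TypeCat.ofHom fun t => ⟨⟨t.down.down.trans h⟩⟩
     naturality := fun _ _ _ => rfl }⟩

lemma opPresheaf_stalk_subsingleton (U : Opens X) (x : X) :
    Subsingleton ((opPresheaf U).stalk x) := by
  constructor
  intro a b
  obtain ⟨W₁, h₁, s₁, rfl⟩ := TopCat.Presheaf.germ_exist (opPresheaf U) a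
  obtain ⟨W₂, h₂, s₂, rfl⟩ := TopCat.Presheaf.germ_exist (opPresheaf U) b
  exact TopCat.Presheaf.germ_ext (opPresheaf U) (W₁ ⊓ W₂) ⟨h₁, h₂⟩ (Opens.infLELeft _ _)
    (Opens.infLERight _ _) (ulift_plift_ext _ _)

lemma opHom_stalk_isIso {U V : Opens X} (h : U ≤ V)
    (hcp : ∀ x : X, IsClosed {x} → x ∈ V → x ∈ U) (x : X) (hx : IsClosed {x}) :
    IsIso ((TopCat.Presheaf.stalkFunctor (Type u) x).map (opHom h).hom) := by
  rw [CategoryTheory.isIso_iff_bijective]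
  constructor
  · intro a b _
    exact (opPresheaf_stalk_subsingleton U x).elim a b
  · intro b
    have b' : (opPresheaf V).stalk x := b
    obtain ⟨W, hxW, s, hb⟩ := TopCat.Presheaf.germ_exist (opPresheaf V) b'
    have hxU : x ∈ U := hcp x hx (s.down.down hxW)
    refine ⟨(opPresheaf U).germ U x hxU ⟨⟨le_refl U⟩⟩, ?_⟩
    exact (opPresheaf_stalk_subsingleton V x).elim _ _

/-- In a Jacobson space, if an open `W ≤ U` contains all closed points of `U` then `U ≤ W`. -/
lemma le_of_closedPoints_subset (hJ : JacobsonSpace X) {W U : Opens X} (hWU : W ≤ U)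
    (h : ∀ x ∈ U, IsClosed {x} → x ∈ W) : U ≤ W := by
  haveI := hJ
  by_contra hc
  have hne : ((U : Set X) \ W).Nonempty := by
    rw [Set.diff_nonempty]
    exact fun hs => hc fun x hx => hs hx
  have hlc : IsLocallyClosed ((U : Set X) \ ↑W) := by
    rw [Set.diff_eq]
    exact U.isOpen.isLocallyClosed.inter W.isOpen.isClosed_compl.isLocallyClosed
  obtain ⟨z, ⟨hzU, hzW⟩, hz⟩ := nonempty_inter_closedPoints hne hlc
  exact hzW (h z hzU hz)

lemma app_injective (hJ : JacobsonSpace X) {F G : TopCat.Sheaf (Type u) X} (φ : F ⟶ G)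
    (h : ∀ x : X, IsClosed {x} →
      Function.Injective ((TopCat.Presheaf.stalkFunctor (Type u) x).map φ.hom))
    (U : Opens X) : Function.Injective (φ.hom.app (op U)) := by
  intro s t hst
  set S : Set (Opens X) := {V | ∃ i : V ⟶ U, F.val.map i.op s = F.val.map i.op t} with hSdef
  have hle : sSup S ≤ U := sSup_le fun V hV => hV.choose.le
  have hcp : ∀ x ∈ U, IsClosed {x} → x ∈ sSup S := by
    intro x hxU hxc
    have e1 : (TopCat.Presheaf.stalkFunctor (Type u) x).map φ.hom
          (TopCat.Presheaf.germ F.val U x hxU s) =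
        TopCat.Presheaf.germ G.val U x hxU (φ.hom.app (op U) s) :=
      TopCat.Presheaf.stalkFunctor_map_germ_apply U x hxU φ.hom s
    have e2 : (TopCat.Presheaf.stalkFunctor (Type u) x).map φ.hom
          (TopCat.Presheaf.germ F.val U x hxU t) =
        TopCat.Presheaf.germ G.val U x hxU (φ.hom.app (op U) t) :=
      TopCat.Presheaf.stalkFunctor_map_germ_apply U x hxU φ.hom t
    have h1 : TopCat.Presheaf.germ F.val U x hxU s = TopCat.Presheaf.germ F.val U x hxU t := by
      apply h x hxc
      exact e1.trans ((congrArg (TopCat.Presheaf.germ G.val U x hxU) hst).trans e2.symm)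
    obtain ⟨V, hxV, i₁, i₂, heq⟩ := TopCat.Presheaf.germ_eq F.val x hxU hxU s t h1
    exact Opens.mem_sSup.mpr ⟨V, ⟨i₁, heq.trans (by rw [Subsingleton.elim i₂ i₁])⟩, hxV⟩
  have hcover : U ≤ iSup fun V : ↥S => (V : Opens X) :=
    (sSup_eq_iSup' S) ▸ le_of_closedPoints_subset hJ hle hcp
  have hS' : ∀ V : ↥S, ∃ i : (V : Opens X) ⟶ U,
      F.val.map i.op s = F.val.map i.op t := fun V => V.2
  choose iV hiV using hS'
  exact F.eq_of_locally_eq' (fun V : ↥S => (V : Opens X)) U iV hcover s t hiV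

lemma app_surjective (hJ : JacobsonSpace X) {F G : TopCat.Sheaf (Type u) X} (φ : F ⟶ G)
    (h : ∀ x : X, IsClosed {x} →
      Function.Bijective ((TopCat.Presheaf.stalkFunctor (Type u) x).map φ.hom))
    (U : Opens X) : Function.Surjective (φ.hom.app (op U)) := by
  intro t
  have hinj := fun V => app_injective hJ φ (fun x hx => (h x hx).1) V
  set S : Set (Opens X) :=
    {V | ∃ (i : V ⟶ U) (s : F.val.obj (op V)), φ.hom.app (op V) s = G.val.map i.op t} with hSdef
  have hle : sSup S ≤ U := sSup_le fun V hV => hV.choose.le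
  have hcp : ∀ x ∈ U, IsClosed {x} → x ∈ sSup S := by
    intro x hxU hxc
    obtain ⟨s₀, hs₀⟩ := (h x hxc).2 (TopCat.Presheaf.germ G.val U x hxU t)
    obtain ⟨V₁, hxV₁, s₁, rfl⟩ := TopCat.Presheaf.germ_exist F.val s₀
    have e1 : (TopCat.Presheaf.stalkFunctor (Type u) x).map φ.hom
          (TopCat.Presheaf.germ F.val V₁ x hxV₁ s₁) =
        TopCat.Presheaf.germ G.val V₁ x hxV₁ (φ.hom.app (op V₁) s₁) :=
      TopCat.Presheaf.stalkFunctor_map_germ_apply V₁ x hxV₁ φ.hom s₁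
    obtain ⟨V₂, hxV₂, i, j, heq⟩ :=
      TopCat.Presheaf.germ_eq G.val x hxV₁ hxU _ _ (e1.symm.trans hs₀)
    refine Opens.mem_sSup.mpr ⟨V₂, ⟨j, F.val.map i.op s₁, ?_⟩, hxV₂⟩
    rw [FunctorToTypes.naturality]
    exact heq
  have hcover : U ≤ iSup fun V : ↥S => (V : Opens X) :=
    (sSup_eq_iSup' S) ▸ le_of_closedPoints_subset hJ hle hcp
  have hS' : ∀ V : ↥S, ∃ (i : (V : Opens X) ⟶ U) (s : F.val.obj (op (V : Opens X))),
      φ.hom.app (op (V : Opens X)) s = G.val.map i.op t := fun V => V.2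
  choose iV sf heq using hS'
  have hcompat : TopCat.Presheaf.IsCompatible F.val (fun V : ↥S => (V : Opens X)) sf := by
    intro a b
    apply hinj ((a : Opens X) ⊓ (b : Opens X))
    show φ.hom.app (op ((a : Opens X) ⊓ (b : Opens X)))
        (F.val.map (Opens.infLELeft (a : Opens X) (b : Opens X)).op (sf a)) =
      φ.hom.app (op ((a : Opens X) ⊓ (b : Opens X)))
        (F.val.map (Opens.infLERight (a : Opens X) (b : Opens X)).op (sf b))
    rw [FunctorToTypes.naturality, FunctorToTypes.naturality, heq, heq,
      ← FunctorToTypes.map_comp_apply, ← FunctorToTypes.map_comp_apply,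
      ← op_comp, ← op_comp]
    exact congrArg (fun k : ((a : Opens X) ⊓ (b : Opens X)) ⟶ U => G.val.map k.op t)
      (Subsingleton.elim _ _)
  obtain ⟨s, hs, -⟩ := F.existsUnique_gluing' (fun V : ↥S => (V : Opens X)) U iV hcover sf hcompat
  have hs' : ∀ V : ↥S, F.val.map (iV V).op s = sf V := hs
  refine ⟨s, ?_⟩
  apply G.eq_of_locally_eq' (fun V : ↥S => (V : Opens X)) U iV hcover
  intro V
  show G.val.map (iV V).op (φ.hom.app (op U) s) = G.val.map (iV V).op t
  rw [← FunctorToTypes.naturality, hs', heq]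

end JacobsonStalkAux

open JacobsonStalkAux TopologicalSpace Opposite

/-- A topological space `X` is Jacobson if and only if the stalk
functors at the closed points of `X` are jointly conservative on set-valued sheaves:
a morphism `φ : F ⟶ G` of sheaves on `X` is an isomorphism as soon as the induced map
on stalks `φ_x : F_x ⟶ G_x` is an isomorphism for every point `x` with `{x}` closed. -/
theorem jacobsonSpace_iff_stalks_at_closed_points_jointly_conservative (X : TopCat.{u}) :
    JacobsonSpace X ↔
      ∀ (F G : TopCat.Sheaf (Type u) X) (φ : F ⟶ G),
        (∀ x : X, IsClosed ({x} : Set X) →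
          IsIso ((TopCat.Presheaf.stalkFunctor (Type u) x).map φ.hom)) →
        IsIso φ := by
  constructor
  · intro hJ F G φ hstalk
    have hb : ∀ x : X, IsClosed {x} →
        Function.Bijective ((TopCat.Presheaf.stalkFunctor (Type u) x).map φ.hom) :=
      fun x hx => (CategoryTheory.isIso_iff_bijective _).mp (hstalk x hx)
    suffices h : IsIso ((TopCat.Sheaf.forget (Type u) X).map φ) by
      exact isIso_of_fully_faithful (TopCat.Sheaf.forget (Type u) X) φ
    suffices h : ∀ U : (Opens ↑X)ᵒᵖ, IsIso (φ.hom.app U) from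
      @NatIso.isIso_of_isIso_app _ _ _ _ F.val G.val φ.hom h
    intro U
    obtain ⟨U⟩ := U
    rw [CategoryTheory.isIso_iff_bijective]
    exact ⟨app_injective hJ φ (fun x hx => (hb x hx).1) U, app_surjective hJ φ hb U⟩
  · intro H
    rw [jacobsonSpace_iff]
    intro Z hZ
    refine subset_antisymm (closure_minimal Set.inter_subset_left hZ) ?_
    set W : Opens X := ⟨Zᶜ, hZ.isOpen_compl⟩ with hWdef
    set U : Opens X := ⟨(closure (Z ∩ closedPoints X))ᶜ, isClosed_closure.isOpen_compl⟩ with hUdef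
    have hWU : W ≤ U := Set.compl_subset_compl.mpr (closure_minimal Set.inter_subset_left hZ)
    have hcp : ∀ x : X, IsClosed {x} → x ∈ U → x ∈ W := by
      intro x hx hxU hxZ
      exact hxU (subset_closure ⟨hxZ, hx⟩)
    haveI : IsIso (opHom hWU) :=
      H _ _ (opHom hWU) (fun x hx => opHom_stalk_isIso hWU hcp x hx)
    have t : ULift.{u} (PLift (U ≤ W)) := (inv (opHom hWU)).hom.app (op U) ⟨⟨le_refl U⟩⟩
    exact Set.compl_subset_compl.mp t.down.down
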